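/- arXiv:1910.04021 — 2 statements merged into one kernel-verified Lean document; each statement's English description precedes it below -/
import Mathlib

section
/- Let u⁻, u⁺ ∈ [0,V] with u⁻ < u⁺. If ρ̂(u⁺) > ρ̌(u⁻), then the ordering ρ̌(u⁺) < ρ̌(u⁻) < ρ̂(u⁺) < ρ̂(u⁻) holds, and moreover u⁺ − u⁻ ≥ (β/2) · ( ρ̂(u⁻) − ρ̂(u⁺) ). -/
open Set

lemma lemW {R β : ℝ} {f g h : ℝ → ℝ}
    (hfd1 : ∀ ρ ∈ Set.Icc (0:ℝ) R, HasDerivAt f (g ρ) ρ)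
    (hfd2 : ∀ ρ ∈ Set.Icc (0:ℝ) R, HasDerivAt g (h ρ) ρ)
    (hconc : ∀ ρ ∈ Set.Icc (0:ℝ) R, h ρ ≤ -β)
    {x y : ℝ} (hx : x ∈ Set.Icc (0:ℝ) R) (hy : y ∈ Set.Icc (0:ℝ) R) :
    f y ≤ f x + g x * (y - x) - β/2 * (y - x)^2 := by
  set G : ℝ → ℝ := fun t => g x - β * (t - x) - g t with hG
  set F : ℝ → ℝ := fun t => f x + g x * (t - x) - β/2 * (t - x)^2 - f t with hF
  have hGd : ∀ t ∈ Set.Icc (0:ℝ) R, HasDerivAt G (-β - h t) t := by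
    intro t ht
    have h1 : HasDerivAt (fun t : ℝ => g x - β * (t - x)) (-β) t := by
      have := ((hasDerivAt_id t).sub_const x).const_mul β
      have h2 := (this.const_sub (g x))
      simpa using h2
    exact h1.sub (hfd2 t ht)
  have hFd : ∀ t ∈ Set.Icc (0:ℝ) R, HasDerivAt F (G t) t := by
    intro t ht
    have hid : HasDerivAt (fun t : ℝ => t - x) 1 t := (hasDerivAt_id t).sub_const x
    have h2 : HasDerivAt (fun t : ℝ => (t - x)^2) (2 * (t - x)) t := by
      simpa using hid.fun_pow 2
    have h3 : HasDerivAt (fun t : ℝ => f x + g x * (t - x) - β/2 * (t - x)^2)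
        (g x * 1 - β/2 * (2 * (t - x))) t :=
      ((hid.const_mul (g x)).const_add (f x)).sub (h2.const_mul (β/2))
    have h4 := h3.sub (hfd1 t ht)
    have h5 : G t = g x * 1 - β/2 * (2 * (t - x)) - g t := by simp only [hG]; ring
    rw [h5]; exact h4
  have hGmono : MonotoneOn G (Set.Icc (0:ℝ) R) := by
    apply monotoneOn_of_deriv_nonneg (convex_Icc _ _)
    · exact fun t ht => (hGd t ht).continuousAt.continuousWithinAt
    · intro t ht
      rw [interior_Icc] at ht
      exact ((hGd t (Ioo_subset_Icc_self ht)).differentiableAt).differentiableWithinAt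
    · intro t ht
      rw [interior_Icc] at ht
      rw [(hGd t (Ioo_subset_Icc_self ht)).deriv]
      have := hconc t (Ioo_subset_Icc_self ht)
      linarith
  have hGx : G x = 0 := by simp [hG]
  have hFx : F x = 0 := by simp [hF]
  have key : 0 ≤ F y := by
    rcases le_total y x with hyx | hxy
    · -- F antitone on [y, x]
      have hsub : Set.Icc y x ⊆ Set.Icc (0:ℝ) R := Icc_subset_Icc hy.1 hx.2
      have hanti : AntitoneOn F (Set.Icc y x) := by
        apply antitoneOn_of_deriv_nonpos (convex_Icc _ _)
        · exact fun t ht => (hFd t (hsub ht)).continuousAt.continuousWithinAt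
        · intro t ht
          rw [interior_Icc] at ht
          exact ((hFd t (hsub (Ioo_subset_Icc_self ht))).differentiableAt).differentiableWithinAt
        · intro t ht
          rw [interior_Icc] at ht
          rw [(hFd t (hsub (Ioo_subset_Icc_self ht))).deriv]
          have : G t ≤ G x := hGmono (hsub (Ioo_subset_Icc_self ht)) hx (le_of_lt ht.2)
          linarith [hGx ▸ this]
      have := hanti (Set.left_mem_Icc.2 hyx) (Set.right_mem_Icc.2 hyx) hyx
      linarith [hFx ▸ this]
    · have hsub : Set.Icc x y ⊆ Set.Icc (0:ℝ) R := Icc_subset_Icc hx.1 hy.2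
      have hmono : MonotoneOn F (Set.Icc x y) := by
        apply monotoneOn_of_deriv_nonneg (convex_Icc _ _)
        · exact fun t ht => (hFd t (hsub ht)).continuousAt.continuousWithinAt
        · intro t ht
          rw [interior_Icc] at ht
          exact ((hFd t (hsub (Ioo_subset_Icc_self ht))).differentiableAt).differentiableWithinAt
        · intro t ht
          rw [interior_Icc] at ht
          rw [(hFd t (hsub (Ioo_subset_Icc_self ht))).deriv]
          have : G x ≤ G t := hGmono hx (hsub (Ioo_subset_Icc_self ht)) (le_of_lt ht.1)
          linarith [hGx ▸ this]
      have := hmono (Set.left_mem_Icc.2 hxy) (Set.right_mem_Icc.2 hxy) hxy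
      linarith [hFx ▸ this]
  simp only [hF] at key
  linarith

set_option maxHeartbeats 1600000 in
theorem stmt_16
    (R β B α V : ℝ) (f v f' f'' v' : ℝ → ℝ)
    (hR : 0 < R) (hβ : 0 < β) (hB : 0 < B) (hα : α ∈ Set.Ioo (0:ℝ) 1)
    (hf0 : f 0 = 0) (hfR : f R = 0)
    (hfv : ∀ ρ ∈ Set.Icc (0:ℝ) R, f ρ = ρ * v ρ)
    (hfd1 : ∀ ρ ∈ Set.Icc (0:ℝ) R, HasDerivAt f (f' ρ) ρ)
    (hfd2 : ∀ ρ ∈ Set.Icc (0:ℝ) R, HasDerivAt f' (f'' ρ) ρ)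
    (hfc : ContinuousOn f'' (Set.Icc (0:ℝ) R))
    (hconc : ∀ ρ ∈ Set.Icc (0:ℝ) R, -B ≤ f'' ρ ∧ f'' ρ ≤ -β)
    (hvd : ∀ ρ ∈ Set.Icc (0:ℝ) R, HasDerivAt v (v' ρ) ρ)
    (hv'neg : ∀ ρ ∈ Set.Ioo (0:ℝ) R, v' ρ < 0)
    (hvnn : ∀ ρ ∈ Set.Icc (0:ℝ) R, 0 ≤ v ρ)
    (hV : V = v 0)
    (rt : ℝ → ℝ)
    (hrt : ∀ u ∈ Set.Icc (0:ℝ) V, rt u ∈ Set.Icc (0:ℝ) (α * R) ∧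
      HasDerivAt (fun x => α * f (x / α)) u (rt u))
    (rc rh : ℝ → ℝ)
    (hrc : ∀ u ∈ Set.Icc (0:ℝ) V, IsLeast
      {ρ : ℝ | ρ ∈ Set.Icc (0:ℝ) R ∧ f ρ = α * f (rt u / α) + u * (ρ - rt u)} (rc u))
    (hrh : ∀ u ∈ Set.Icc (0:ℝ) V, IsGreatest
      {ρ : ℝ | ρ ∈ Set.Icc (0:ℝ) R ∧ f ρ = α * f (rt u / α) + u * (ρ - rt u)} (rh u))
    :
    ∀ um ∈ Set.Icc (0:ℝ) V, ∀ up ∈ Set.Icc (0:ℝ) V,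
      um < up → rc um < rh up →
      (rc up < rc um ∧ rc um < rh up ∧ rh up < rh um) ∧
      up - um ≥ (β / 2) * (rh um - rh up) := by
  obtain ⟨hα0, hα1⟩ := hα
  have hα' : α ≠ 0 := ne_of_gt hα0
  have hαR0 : 0 < α * R := mul_pos hα0 hR
  have hαRR : α * R ≤ R := mul_le_of_le_one_left hR.le hα1.le
  have Wf : ∀ x ∈ Set.Icc (0:ℝ) R, ∀ y ∈ Set.Icc (0:ℝ) R,
      f y ≤ f x + f' x * (y - x) - β/2 * (y - x)^2 :=
    fun x hx y hy => lemW hfd1 hfd2 (fun ρ hρ => (hconc ρ hρ).2) hx hy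
  have hdivmem : ∀ x ∈ Set.Icc (0:ℝ) (α*R), x/α ∈ Set.Icc (0:ℝ) R := by
    intro x hx
    constructor
    · exact div_nonneg hx.1 hα0.le
    · rw [div_le_iff₀ hα0]; nlinarith [hx.2]
  -- tangent line of f_α lies above f_α
  have Wfα : ∀ x ∈ Set.Icc (0:ℝ) (α*R), ∀ y ∈ Set.Icc (0:ℝ) (α*R),
      α * f (y/α) ≤ α * f (x/α) + f' (x/α) * (y - x) := by
    intro x hx y hy
    have h1 := Wf (x/α) (hdivmem x hx) (y/α) (hdivmem y hy)
    have h2 := mul_le_mul_of_nonneg_left h1 hα0.le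
    have e : α * (f (x/α) + f' (x/α) * (y/α - x/α) - β/2 * (y/α - x/α)^2)
        = α * f (x/α) + f' (x/α) * (y - x) - β/(2*α) * (y - x)^2 := by
      field_simp
    rw [e] at h2
    have h3 : 0 ≤ β/(2*α) * (y - x)^2 := by positivity
    linarith
  -- f dominates the reduced flux
  have f_ge_fα : ∀ x ∈ Set.Icc (0:ℝ) (α*R), α * f (x/α) + β/2*(1-α)*x^2 ≤ f x := by
    intro x hx
    have hxR : x ∈ Set.Icc (0:ℝ) R := ⟨hx.1, le_trans hx.2 hαRR⟩
    have h1 := Wf x hxR 0 ⟨le_refl 0, hR.le⟩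
    have h2 := Wf x hxR (x/α) (hdivmem x hx)
    have h3 : α * f (x/α) ≤ α * (f x + f' x * (x/α - x) - β/2 * (x/α - x)^2) :=
      mul_le_mul_of_nonneg_left h2 hα0.le
    have h4 : (1-α) * f 0 ≤ (1-α) * (f x + f' x * (0 - x) - β/2 * (0 - x)^2) :=
      mul_le_mul_of_nonneg_left h1 (by linarith)
    have h5 : α * (x/α - x) + (1-α) * (0 - x) = 0 := by field_simp; ring
    have h7 : f' x * (α * (x/α - x) + (1-α) * (0 - x)) = 0 := by rw [h5]; ring
    have h6 : 0 ≤ β/2 * (α * (x/α - x)^2) := by positivity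
    rw [hf0] at h4
    nlinarith [h3, h4, h7, h6]
  -- derivative identity
  have hu_eq : ∀ u ∈ Set.Icc (0:ℝ) V, u = f' (rt u / α) := by
    intro u hu
    have h1 := (hrt u hu).2
    have hmem := hdivmem (rt u) (hrt u hu).1
    have hdiv : HasDerivAt (fun x : ℝ => x / α) (1/α) (rt u) := by
      simpa using (hasDerivAt_id (rt u)).div_const α
    have h2 : HasDerivAt (fun x => α * f (x / α)) (α * (f' (rt u / α) * (1/α))) (rt u) :=
      (((hfd1 _ hmem).comp (rt u) hdiv)).const_mul α
    have h3 := h1.unique h2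
    have h4 : α * (f' (rt u / α) * (1/α)) = f' (rt u / α) := by field_simp
    rw [h4] at h3
    exact h3
  -- tangent line of f_α at rt u lies above f_α everywhere
  have tanAbove : ∀ u ∈ Set.Icc (0:ℝ) V, ∀ x ∈ Set.Icc (0:ℝ) (α*R),
      α * f (x/α) ≤ α * f (rt u / α) + u * (x - rt u) := by
    intro u hu x hx
    have h1 := Wfα (rt u) (hrt u hu).1 x hx
    rw [← hu_eq u hu] at h1
    exact h1
  -- interior nonnegativity with quadratic bound
  have keyNN : ∀ u ∈ Set.Icc (0:ℝ) V, ∀ x, rc u ≤ x → x ≤ rh u →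
      β/2 * (x - rc u) * (rh u - x) + (α * f (rt u / α) + u * (x - rt u)) ≤ f x := by
    intro u hu x hax hxb
    obtain ⟨⟨haI, haf⟩, halb⟩ := hrc u hu
    obtain ⟨⟨hbI, hbf⟩, hbub⟩ := hrh u hu
    have hxI : x ∈ Set.Icc (0:ℝ) R := ⟨le_trans haI.1 hax, le_trans hxb hbI.2⟩
    rcases eq_or_lt_of_le (le_trans hax hxb) with heq | hab
    · have hxa : x = rc u := le_antisymm (heq ▸ hxb) hax
      rw [hxa, haf]
      nlinarith []
    · have h1 := Wf x hxI (rc u) haI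
      have h2 := Wf x hxI (rh u) hbI
      have h3 := mul_le_mul_of_nonneg_left h1 (sub_nonneg.2 hxb)
      have h4 := mul_le_mul_of_nonneg_left h2 (sub_nonneg.2 hax)
      rw [haf] at h3
      rw [hbf] at h4
      have hba : 0 < rh u - rc u := sub_pos.2 hab
      nlinarith [h3, h4, hba, mul_pos hβ hba]
  -- membership criterion: points above the line lie between rc and rh
  have keyMem : ∀ u ∈ Set.Icc (0:ℝ) V, ∀ x ∈ Set.Icc (0:ℝ) R,
      α * f (rt u / α) + u * (x - rt u) ≤ f x → rc u ≤ x ∧ x ≤ rh u := by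
    intro u hu x hxI hLx
    obtain ⟨⟨haI, haf⟩, halb⟩ := hrc u hu
    obtain ⟨⟨hbI, hbf⟩, hbub⟩ := hrh u hu
    have hcont : ContinuousOn
        (fun ρ => f ρ - (α * f (rt u / α) + u * (ρ - rt u))) (Set.Icc (0:ℝ) R) := by
      apply ContinuousOn.sub
      · exact fun t ht => (hfd1 t ht).continuousAt.continuousWithinAt
      · fun_prop
    have hg0 : f 0 - (α * f (rt u / α) + u * (0 - rt u)) ≤ 0 := by
      have h1 := tanAbove u hu 0 ⟨le_refl 0, hαR0.le⟩
      rw [zero_div, hf0] at h1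
      rw [hf0]
      linarith
    have hgR : f R - (α * f (rt u / α) + u * (R - rt u)) ≤ 0 := by
      have h1 := tanAbove u hu (α*R) ⟨hαR0.le, le_refl _⟩
      have h2 : α * R / α = R := by field_simp
      rw [h2, hfR] at h1
      have h3 : u * (α * R - rt u) ≤ u * (R - rt u) :=
        mul_le_mul_of_nonneg_left (by linarith) hu.1
      rw [hfR]
      linarith
    rcases eq_or_lt_of_le hLx with heq | hlt
    · exact ⟨halb ⟨hxI, heq.symm⟩, hbub ⟨hxI, heq.symm⟩⟩
    · constructor
      · have hsub : Set.Icc (0:ℝ) x ⊆ Set.Icc (0:ℝ) R := Icc_subset_Icc (le_refl _) hxI.2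
        have hIVT := intermediate_value_Icc hxI.1 (hcont.mono hsub)
        have h0mem : (0:ℝ) ∈ Set.Icc (f 0 - (α * f (rt u / α) + u * (0 - rt u)))
            (f x - (α * f (rt u / α) + u * (x - rt u))) := ⟨hg0, by linarith⟩
        obtain ⟨z, hzI, hz⟩ := hIVT h0mem
        have hzfull : z ∈ Set.Icc (0:ℝ) R := hsub hzI
        have : rc u ≤ z := halb ⟨hzfull, by simp only [sub_eq_zero] at hz; linarith [hz]⟩
        linarith [hzI.2]
      · have hsub : Set.Icc x R ⊆ Set.Icc (0:ℝ) R := Icc_subset_Icc hxI.1 (le_refl _)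
        have hIVT := intermediate_value_Icc' hxI.2 (hcont.mono hsub)
        have h0mem : (0:ℝ) ∈ Set.Icc (f R - (α * f (rt u / α) + u * (R - rt u)))
            (f x - (α * f (rt u / α) + u * (x - rt u))) := ⟨hgR, by linarith⟩
        obtain ⟨z, hzI, hz⟩ := hIVT h0mem
        have hzfull : z ∈ Set.Icc (0:ℝ) R := hsub hzI
        have : z ≤ rh u := hbub ⟨hzfull, by simp only [sub_eq_zero] at hz; linarith [hz]⟩
        linarith [hzI.1]
  -- rt u lies between rc u and rh u
  have htmem : ∀ u ∈ Set.Icc (0:ℝ) V, rc u ≤ rt u ∧ rt u ≤ rh u := by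
    intro u hu
    have htI := (hrt u hu).1
    have htIR : rt u ∈ Set.Icc (0:ℝ) R := ⟨htI.1, le_trans htI.2 hαRR⟩
    apply keyMem u hu (rt u) htIR
    have h1 := f_ge_fα (rt u) htI
    have h2 : 0 ≤ β/2*(1-α)*(rt u)^2 :=
      mul_nonneg (mul_nonneg (by positivity) (by linarith)) (sq_nonneg _)
    nlinarith [h1, h2]
  -- MAIN ARGUMENT
  intro um hum up hup hmp hba
  obtain ⟨⟨hAI, hAf⟩, hAlb⟩ := hrc um hum
  obtain ⟨⟨hBI, hBf⟩, hBub⟩ := hrh um hum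
  obtain ⟨⟨hPI, hPf⟩, hPlb⟩ := hrc up hup
  obtain ⟨⟨hQI, hQf⟩, hQub⟩ := hrh up hup
  have htm := htmem um hum
  have htp := htmem up hup
  have htmI := (hrt um hum).1
  have htpI := (hrt up hup).1
  -- D(rt up) ≥ 0 and D(rt um) ≤ 0
  have hDtp : α * f (rt up / α) ≤ α * f (rt um / α) + um * (rt up - rt um) :=
    tanAbove um hum (rt up) htpI
  have hDtm : α * f (rt um / α) ≤ α * f (rt up / α) + up * (rt um - rt up) :=
    tanAbove up hup (rt um) htmI
  -- Step 1: D(rc um) ≥ 0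
  have hDA : α * f (rt up / α) + up * (rc um - rt up)
      ≤ α * f (rt um / α) + um * (rc um - rt um) := by
    by_contra h
    push_neg at h
    have h5 : rt up < rc um := by
      by_contra h5
      push_neg at h5
      nlinarith [hDtp, mul_nonneg (le_of_lt (sub_pos.2 hmp)) (sub_nonneg.2 h5)]
    have h6 : ¬ (rc up ≤ rc um) := by
      intro hPA
      have := keyNN up hup (rc um) hPA hba.le
      nlinarith [mul_nonneg (mul_nonneg (by positivity : (0:ℝ) ≤ β/2) (sub_nonneg.2 hPA))
        (sub_nonneg.2 hba.le), hAf]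
    push_neg at h6
    linarith [htp.1]
  -- Step 2: rc up ≤ rc um ≤ rh up
  have hPA : rc up ≤ rc um ∧ rc um ≤ rh up := by
    apply keyMem up hup (rc um) hAI
    rw [hAf]
    exact hDA
  -- Step 3: D(rh up) ≤ 0
  have hDQ : α * f (rt um / α) + um * (rh up - rt um)
      ≤ α * f (rt up / α) + up * (rh up - rt up) := by
    by_contra h
    push_neg at h
    have h5 : rh up < rt um := by
      by_contra h5
      push_neg at h5
      nlinarith [hDtm, mul_nonneg (le_of_lt (sub_pos.2 hmp)) (sub_nonneg.2 h5)]
    have h6 : ¬ (rh up ≤ rh um) := by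
      intro hQB
      have := keyNN um hum (rh up) hba.le hQB
      nlinarith [mul_nonneg (mul_nonneg (by positivity : (0:ℝ) ≤ β/2) (sub_nonneg.2 hba.le))
        (sub_nonneg.2 hQB), hQf]
    push_neg at h6
    linarith [htm.2]
  -- Step 4: rc um ≤ rh up ≤ rh um
  have hQB : rc um ≤ rh up ∧ rh up ≤ rh um := by
    apply keyMem um hum (rh up) hQI
    rw [hQf]
    exact hDQ
  -- Step 5: strict rc up < rc um
  have hPAs : rc up < rc um := by
    rcases eq_or_lt_of_le hPA.1 with heq | h
    swap
    · exact h
    exfalso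
    have h1 : f (rc um) = α * f (rt up / α) + up * (rc um - rt up) := by
      rw [← heq]; exact hPf
    have hEq : α * f (rt up / α) + up * (rc um - rt up)
        = α * f (rt um / α) + um * (rc um - rt um) := by rw [← h1, hAf]
    have h7 : rt up ≤ rc um := by
      by_contra h7
      push_neg at h7
      nlinarith [hDtp, hEq, mul_pos (sub_pos.2 hmp) (sub_pos.2 h7)]
    have h8b : rc um ≤ rt up := by rw [← heq]; exact htp.1
    have h8 : rt up = rc um := le_antisymm h7 h8b
    have h9 : f (rc um) = α * f (rt up / α) := by rw [h1, ← h8]; ring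
    have h9' : f (rt up) = f (rc um) := by rw [h8]
    have h10 := f_ge_fα (rt up) htpI
    have h11 : rt up = 0 := by
      by_contra hne
      have hsq : 0 < (rt up)^2 := by positivity
      have hq : 0 < β/2*(1-α)*(rt up)^2 :=
        mul_pos (mul_pos (by positivity) (by linarith)) hsq
      linarith [h9, h9', h10, hq]
    have h12 : α * f (rt up / α) = 0 := by rw [h11]; simp [hf0]
    have h13 : f (rh up) = up * rh up := by rw [hQf, h12, h11]; ring
    have h14 : up = f' 0 := by
      have h := hu_eq up hup
      rw [h11] at h
      simpa using h
    have h15 := Wf 0 ⟨le_refl 0, hR.le⟩ (rh up) hQI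
    rw [hf0, ← h14] at h15
    have h16 : 0 < rh up := lt_of_le_of_lt hAI.1 hba
    nlinarith [h13, h15, h16, mul_pos hβ (mul_pos h16 h16)]
  -- Step 6: strict rh up < rh um
  have hQBs : rh up < rh um := by
    rcases eq_or_lt_of_le hQB.2 with heq | h
    swap
    · exact h
    exfalso
    have h1 : f (rh up) = α * f (rt um / α) + um * (rh up - rt um) := by
      rw [heq]; exact hBf
    have hEq : α * f (rt um / α) + um * (rh up - rt um)
        = α * f (rt up / α) + up * (rh up - rt up) := by rw [← h1, hQf]
    have h7 : rh up ≤ rt um := by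
      by_contra h7
      push_neg at h7
      nlinarith [hDtm, hEq, mul_pos (sub_pos.2 hmp) (sub_pos.2 h7)]
    have h8a : rt um ≤ rh up := by rw [heq]; exact htm.2
    have h8 : rt um = rh up := le_antisymm h8a h7
    have h9 : f (rh up) = α * f (rt um / α) := by rw [h1, ← h8]; ring
    have h9' : f (rt um) = f (rh up) := by rw [h8]
    have h10 := f_ge_fα (rt um) htmI
    have h11 : rt um = 0 := by
      by_contra hne
      have hsq : 0 < (rt um)^2 := by positivity
      have hq : 0 < β/2*(1-α)*(rt um)^2 :=
        mul_pos (mul_pos (by positivity) (by linarith)) hsq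
      linarith [h9, h9', h10, hq]
    have h12 : rh up = 0 := by rw [← h8, h11]
    linarith [hAI.1, hba, h12]
  refine ⟨⟨hPAs, hba, hQBs⟩, ?_⟩
  -- quantitative bound
  have h10 := keyNN um hum (rh up) hQB.1 hQB.2
  rw [hQf] at h10
  rw [ge_iff_le]
  nlinarith [h10, hDA, sub_pos.2 hba]
end

section
/- Let u⁻, u⁺ ∈ [0,V] with u⁺ < u⁻. If ρ̌(u⁺) < ρ̂(u⁻), then the ordering ρ̌(u⁻) < ρ̌(u⁺) < ρ̂(u⁻) < ρ̂(u⁺) holds, and moreover u⁻ − u⁺ ≥ (β/2) · ( ρ̌(u⁺) − ρ̌(u⁻) ). -/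
open Set

lemma aux_mvt (g g' : ℝ → ℝ) {a b : ℝ} (hab : a < b)
    (hd : ∀ x ∈ Set.Icc a b, HasDerivAt g (g' x) x) :
    ∃ c ∈ Set.Ioo a b, g b - g a = g' c * (b - a) := by
  obtain ⟨c, hc, hceq⟩ := exists_hasDerivAt_eq_slope g g' hab
    (fun x hx => (hd x hx).continuousAt.continuousWithinAt)
    (fun x hx => hd x ⟨le_of_lt hx.1, le_of_lt hx.2⟩)
  refine ⟨c, hc, ?_⟩
  rw [hceq, div_mul_cancel₀ _ (sub_ne_zero.2 hab.ne')]

lemma aux_three_point (g g' : ℝ → ℝ) {a m b : ℝ}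
    (ham : a < m) (hmb : m < b)
    (hd : ∀ x ∈ Set.Icc a b, HasDerivAt g (g' x) x)
    (hanti : ∀ x ∈ Set.Icc a b, ∀ y ∈ Set.Icc a b, x < y → g' y ≤ g' x) :
    (b - m) * g a + (m - a) * g b ≤ (b - a) * g m := by
  obtain ⟨c₁, hc₁, e₁⟩ := aux_mvt g g' ham
    (fun x hx => hd x ⟨hx.1, le_trans hx.2 (le_of_lt hmb)⟩)
  obtain ⟨c₂, hc₂, e₂⟩ := aux_mvt g g' hmb
    (fun x hx => hd x ⟨le_trans (le_of_lt ham) hx.1, hx.2⟩)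
  have hcc : c₁ < c₂ := lt_trans hc₁.2 hc₂.1
  have hle : g' c₂ ≤ g' c₁ := hanti c₁ ⟨le_of_lt hc₁.1, le_of_lt (lt_trans hc₁.2 hmb)⟩
    c₂ ⟨le_of_lt (lt_trans ham hc₂.1), le_of_lt hc₂.2⟩ hcc
  have expand : (b - m) * g a + (m - a) * g b - (b - a) * g m
      = (m - a) * (b - m) * (g' c₂ - g' c₁) := by
    linear_combination (-(b - m)) * e₁ + (m - a) * e₂
  nlinarith [mul_nonneg (mul_nonneg (le_of_lt (sub_pos.2 ham)) (le_of_lt (sub_pos.2 hmb)))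
    (sub_nonneg.2 hle)]

lemma aux_tangent (g g' : ℝ → ℝ) {a b : ℝ}
    (hd : ∀ x ∈ Set.Icc a b, HasDerivAt g (g' x) x)
    (hanti : ∀ x ∈ Set.Icc a b, ∀ y ∈ Set.Icc a b, x < y → g' y ≤ g' x)
    {t x : ℝ} (ht : t ∈ Set.Icc a b) (hx : x ∈ Set.Icc a b) :
    g x ≤ g t + g' t * (x - t) := by
  rcases lt_trichotomy x t with h | h | h
  · obtain ⟨c, hc, e⟩ := aux_mvt g g' h
      (fun z hz => hd z ⟨le_trans hx.1 hz.1, le_trans hz.2 ht.2⟩)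
    have : g' t ≤ g' c := hanti c ⟨le_trans hx.1 (le_of_lt hc.1), le_trans (le_of_lt hc.2) ht.2⟩
      t ht hc.2
    nlinarith [sub_pos.2 h]
  · rw [h]; simp
  · obtain ⟨c, hc, e⟩ := aux_mvt g g' h
      (fun z hz => hd z ⟨le_trans ht.1 hz.1, le_trans hz.2 hx.2⟩)
    have : g' c ≤ g' t := hanti t ht c
      ⟨le_trans ht.1 (le_of_lt hc.1), le_trans (le_of_lt hc.2) hx.2⟩ hc.1
    nlinarith [sub_pos.2 h]

theorem stmt_17
    (R β B α V : ℝ) (f v f' f'' v' : ℝ → ℝ)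
    (hR : 0 < R) (hβ : 0 < β) (hB : 0 < B) (hα : α ∈ Set.Ioo (0:ℝ) 1)
    (hf0 : f 0 = 0) (hfR : f R = 0)
    (hfv : ∀ ρ ∈ Set.Icc (0:ℝ) R, f ρ = ρ * v ρ)
    (hfd1 : ∀ ρ ∈ Set.Icc (0:ℝ) R, HasDerivAt f (f' ρ) ρ)
    (hfd2 : ∀ ρ ∈ Set.Icc (0:ℝ) R, HasDerivAt f' (f'' ρ) ρ)
    (hfc : ContinuousOn f'' (Set.Icc (0:ℝ) R))
    (hconc : ∀ ρ ∈ Set.Icc (0:ℝ) R, -B ≤ f'' ρ ∧ f'' ρ ≤ -β)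
    (hvd : ∀ ρ ∈ Set.Icc (0:ℝ) R, HasDerivAt v (v' ρ) ρ)
    (hv'neg : ∀ ρ ∈ Set.Ioo (0:ℝ) R, v' ρ < 0)
    (hvnn : ∀ ρ ∈ Set.Icc (0:ℝ) R, 0 ≤ v ρ)
    (hV : V = v 0)
    (rt : ℝ → ℝ)
    (hrt : ∀ u ∈ Set.Icc (0:ℝ) V, rt u ∈ Set.Icc (0:ℝ) (α * R) ∧
      HasDerivAt (fun x => α * f (x / α)) u (rt u))
    (rc rh : ℝ → ℝ)
    (hrc : ∀ u ∈ Set.Icc (0:ℝ) V, IsLeast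
      {ρ : ℝ | ρ ∈ Set.Icc (0:ℝ) R ∧ f ρ = α * f (rt u / α) + u * (ρ - rt u)} (rc u))
    (hrh : ∀ u ∈ Set.Icc (0:ℝ) V, IsGreatest
      {ρ : ℝ | ρ ∈ Set.Icc (0:ℝ) R ∧ f ρ = α * f (rt u / α) + u * (ρ - rt u)} (rh u))
    :
    ∀ um ∈ Set.Icc (0:ℝ) V, ∀ up ∈ Set.Icc (0:ℝ) V,
      up < um → rc up < rh um →
      (rc um < rc up ∧ rc up < rh um ∧ rh um < rh up) ∧
      um - up ≥ (β / 2) * (rc up - rc um) := by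
  intro um hum up hup hlt hcross
  obtain ⟨hα0, hα1⟩ := hα
  have hαR : α * R < R := by nlinarith
  have hαR0 : 0 ≤ α * R := by positivity
  -- instances
  have Htm := hrt um hum
  have Htp := hrt up hup
  have Hcm := hrc um hum
  have Hhm := hrh um hum
  have Hcp := hrc up hup
  have Hhp := hrh up hup
  set tm := rt um with htm_def
  set tp := rt up with htp_def
  set Km := α * f (tm / α) with hKm_def
  set Kp := α * f (tp / α) with hKp_def
  set cm := rc um with hcm_def
  set hm := rh um with hhm_def
  set cp := rc up with hcp_def
  set hp := rh up with hhp_def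
  have htmI : tm ∈ Set.Icc 0 (α * R) := Htm.1
  have htpI : tp ∈ Set.Icc 0 (α * R) := Htp.1
  have hcmI : cm ∈ Set.Icc (0:ℝ) R := Hcm.1.1
  have hhmI : hm ∈ Set.Icc (0:ℝ) R := Hhm.1.1
  have hcpI : cp ∈ Set.Icc (0:ℝ) R := Hcp.1.1
  have hhpI : hp ∈ Set.Icc (0:ℝ) R := Hhp.1.1
  have ecm : f cm = Km + um * (cm - tm) := Hcm.1.2
  have ehm : f hm = Km + um * (hm - tm) := Hhm.1.2
  have ecp : f cp = Kp + up * (cp - tp) := Hcp.1.2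
  have ehp : f hp = Kp + up * (hp - tp) := Hhp.1.2
  have um0 : 0 ≤ um := hum.1
  have up0 : 0 ≤ up := hup.1
  -- continuity of f
  have fcont : ContinuousOn f (Set.Icc (0:ℝ) R) :=
    fun x hx => (hfd1 x hx).continuousAt.continuousWithinAt
  -- derivative strictly decreasing with modulus β
  have d_anti : ∀ x ∈ Set.Icc (0:ℝ) R, ∀ y ∈ Set.Icc (0:ℝ) R, x < y →
      f' y + β * (y - x) ≤ f' x := by
    intro x hx y hy hxy
    obtain ⟨c, hc, e⟩ := aux_mvt f' f'' hxy
      (fun z hz => hfd2 z ⟨le_trans hx.1 hz.1, le_trans hz.2 hy.2⟩)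
    have hcI : c ∈ Set.Icc (0:ℝ) R :=
      ⟨le_trans hx.1 (le_of_lt hc.1), le_trans (le_of_lt hc.2) hy.2⟩
    have := (hconc c hcI).2
    nlinarith [sub_pos.2 hxy]
  have d_anti_w : ∀ x ∈ Set.Icc (0:ℝ) R, ∀ y ∈ Set.Icc (0:ℝ) R, x < y → f' y ≤ f' x := by
    intro x hx y hy hxy
    have := d_anti x hx y hy hxy
    nlinarith [sub_pos.2 hxy]
  -- weak three point for f
  have tp3 : ∀ a m b : ℝ, 0 ≤ a → b ≤ R → a < m → m < b →
      (b - m) * f a + (m - a) * f b ≤ (b - a) * f m := by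
    intro a m b ha hb ham hmb
    have hsub : Set.Icc a b ⊆ Set.Icc (0:ℝ) R :=
      Set.Icc_subset_Icc ha hb
    exact aux_three_point f f' ham hmb (fun x hx => hfd1 x (hsub hx))
      (fun x hx y hy hxy => d_anti_w x (hsub hx) y (hsub hy) hxy)
  -- strong three point for f
  have tp3s : ∀ a m b : ℝ, 0 ≤ a → b ≤ R → a < m → m < b →
      (b - m) * f a + (m - a) * f b + β / 2 * ((m - a) * ((b - m) * (b - a)))
        ≤ (b - a) * f m := by
    intro a m b ha hb ham hmb
    have hsub : Set.Icc a b ⊆ Set.Icc (0:ℝ) R :=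
      Set.Icc_subset_Icc ha hb
    have hdw : ∀ x ∈ Set.Icc a b,
        HasDerivAt (fun y => f y + β / 2 * y ^ 2) (f' x + β * x) x := by
      intro x hx
      have hq : HasDerivAt (fun y : ℝ => β / 2 * y ^ 2) (β * x) x := by
        have := (hasDerivAt_pow 2 x).const_mul (β / 2)
        refine this.congr_deriv ?_
        push_cast
        ring
      exact (hfd1 x (hsub hx)).add hq
    have hwanti : ∀ x ∈ Set.Icc a b, ∀ y ∈ Set.Icc a b, x < y →
        f' y + β * y ≤ f' x + β * x := by
      intro x hx y hy hxy
      have := d_anti x (hsub hx) y (hsub hy) hxy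
      linarith
    have h3 := aux_three_point (fun y => f y + β / 2 * y ^ 2) (fun x => f' x + β * x)
      ham hmb hdw hwanti
    have idq : (b - m) * (β / 2 * a ^ 2) + (m - a) * (β / 2 * b ^ 2)
        - (b - a) * (β / 2 * m ^ 2) = β / 2 * ((m - a) * ((b - m) * (b - a))) := by ring
    linarith [h3, idq]
  -- derivative of the reduced flux
  have hF : ∀ x ∈ Set.Icc 0 (α * R),
      HasDerivAt (fun z => α * f (z / α)) (f' (x / α)) x := by
    intro x hx
    have hxy : x / α ∈ Set.Icc (0:ℝ) R := by
      constructor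
      · exact div_nonneg hx.1 (le_of_lt hα0)
      · rw [div_le_iff₀ hα0]
        linarith [hx.2]
    have h1 : HasDerivAt (fun z : ℝ => z / α) (1 / α) x := by
      simpa using (hasDerivAt_id x).div_const α
    have h2 := ((hfd1 _ hxy).comp x h1).const_mul α
    refine h2.congr_deriv ?_
    field_simp
  have hFanti : ∀ x ∈ Set.Icc 0 (α * R), ∀ y ∈ Set.Icc 0 (α * R), x < y →
      f' (y / α) ≤ f' (x / α) := by
    intro x hx y hy hxy
    have hxI : x / α ∈ Set.Icc (0:ℝ) R :=
      ⟨div_nonneg hx.1 (le_of_lt hα0), by rw [div_le_iff₀ hα0]; linarith [hx.2]⟩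
    have hyI : y / α ∈ Set.Icc (0:ℝ) R :=
      ⟨div_nonneg hy.1 (le_of_lt hα0), by rw [div_le_iff₀ hα0]; linarith [hy.2]⟩
    exact d_anti_w _ hxI _ hyI ((div_lt_div_iff_of_pos_right hα0).2 hxy)
  -- identification of um, up with f' at tangency points
  have hum_eq : um = f' (tm / α) := HasDerivAt.unique Htm.2 (hF tm htmI)
  have hup_eq : up = f' (tp / α) := HasDerivAt.unique Htp.2 (hF tp htpI)
  -- tangent line bounds for the reduced flux
  have tangm : ∀ x ∈ Set.Icc 0 (α * R), α * f (x / α) ≤ Km + um * (x - tm) := by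
    intro x hx
    have h0 := aux_tangent (fun z => α * f (z / α)) (fun z => f' (z / α)) hF hFanti htmI hx
    have h1 : α * f (x / α) ≤ α * f (tm / α) + f' (tm / α) * (x - tm) := h0
    rw [← hum_eq] at h1
    exact h1
  have tangp : ∀ x ∈ Set.Icc 0 (α * R), α * f (x / α) ≤ Kp + up * (x - tp) := by
    intro x hx
    have h0 := aux_tangent (fun z => α * f (z / α)) (fun z => f' (z / α)) hF hFanti htpI hx
    have h1 : α * f (x / α) ≤ α * f (tp / α) + f' (tp / α) * (x - tp) := h0
    rw [← hup_eq] at h1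
    exact h1
  have KmKp : Km ≤ Kp + up * (tm - tp) := tangp tm htmI
  have KpKm : Kp ≤ Km + um * (tp - tm) := tangm tp htpI
  have cmnn : 0 ≤ Km - um * tm := by
    have := tangm 0 ⟨le_refl 0, hαR0⟩
    rw [zero_div, hf0] at this
    linarith
  have cpnn : 0 ≤ Kp - up * tp := by
    have := tangp 0 ⟨le_refl 0, hαR0⟩
    rw [zero_div, hf0] at this
    linarith
  -- "inside" lemma via IVT
  have inside : ∀ (u K t L G x : ℝ),
      IsLeast {ρ : ℝ | ρ ∈ Set.Icc (0:ℝ) R ∧ f ρ = K + u * (ρ - t)} L →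
      IsGreatest {ρ : ℝ | ρ ∈ Set.Icc (0:ℝ) R ∧ f ρ = K + u * (ρ - t)} G →
      0 ≤ K - u * t → 0 ≤ u →
      x ∈ Set.Icc (0:ℝ) R → K + u * (x - t) < f x → L < x ∧ x < G := by
    intro u K t L G x hL hG hc hu hx hgx
    have gcont : ContinuousOn (fun z => f z - (K + u * (z - t))) (Set.Icc (0:ℝ) R) :=
      fcont.sub (Continuous.continuousOn (continuous_const.add (continuous_const.mul (continuous_sub_right t))))
    have g0 : f 0 - (K + u * (0 - t)) ≤ 0 := by rw [hf0]; linarith only [hc]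
    have gR : f R - (K + u * (R - t)) ≤ 0 := by
      rw [hfR]
      linarith only [hc, mul_nonneg hu (le_of_lt hR)]
    have hgx' : 0 < f x - (K + u * (x - t)) := by linarith only [hgx]
    have hLx : L ≠ x := by
      intro he
      have h2 := hL.1.2
      rw [he] at h2
      linarith only [h2, hgx]
    have hGx : G ≠ x := by
      intro he
      have h2 := hG.1.2
      rw [he] at h2
      linarith only [h2, hgx]
    constructor
    · have hiv := intermediate_value_Icc hx.1
        (gcont.mono (Set.Icc_subset_Icc (le_refl 0) hx.2))
      have hmem : (0:ℝ) ∈ Set.Icc (f 0 - (K + u * (0 - t))) (f x - (K + u * (x - t))) :=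
        ⟨g0, le_of_lt hgx'⟩
      obtain ⟨z, hz, hz0⟩ := hiv hmem
      have hzS : z ∈ {ρ : ℝ | ρ ∈ Set.Icc (0:ℝ) R ∧ f ρ = K + u * (ρ - t)} := by
        refine ⟨⟨hz.1, le_trans hz.2 hx.2⟩, ?_⟩
        simp only at hz0
        linarith only [hz0]
      exact lt_of_le_of_ne (le_trans (hL.2 hzS) hz.2) hLx
    · have hiv := intermediate_value_Icc' hx.2
        (gcont.mono (Set.Icc_subset_Icc hx.1 (le_refl R)))
      have hmem : (0:ℝ) ∈ Set.Icc (f R - (K + u * (R - t))) (f x - (K + u * (x - t))) :=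
        ⟨gR, le_of_lt hgx'⟩
      obtain ⟨z, hz, hz0⟩ := hiv hmem
      have hzS : z ∈ {ρ : ℝ | ρ ∈ Set.Icc (0:ℝ) R ∧ f ρ = K + u * (ρ - t)} := by
        refine ⟨⟨le_trans hx.1 hz.1, hz.2⟩, ?_⟩
        simp only at hz0
        linarith only [hz0]
      exact lt_of_le_of_ne' (le_trans hz.1 (hG.2 hzS)) hGx
  -- tangency points ordered
  have tmtp : tm < tp := by
    rcases lt_trichotomy tm tp with h | h | h
    · exact h
    · exfalso
      have : um = up := by rw [hum_eq, hup_eq, h]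
      linarith only [this, hlt]
    · exfalso
      have h2 := hFanti tp htpI tm htmI h
      rw [← hum_eq, ← hup_eq] at h2
      linarith only [h2, hlt]
  -- strict gain of f over the reduced flux
  have fstrict : ∀ y : ℝ, 0 < y → y ≤ R → α * f y < f (α * y) := by
    intro y hy hyR
    have h1 : 0 < α * y := by positivity
    have h2 : α * y < y := by linarith only [mul_pos (sub_pos.2 hα1) hy]
    have h3 := tp3s 0 (α * y) y (le_refl 0) hyR h1 h2
    rw [hf0] at h3
    have p1 : (0:ℝ) < β / 2 := by positivity
    have p2 : 0 < α * y - 0 := by linarith only [h1]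
    have p3 : 0 < y - α * y := by linarith only [h2]
    have p4 : 0 < y - 0 := by linarith only [hy]
    have pos := mul_pos p1 (mul_pos p2 (mul_pos p3 p4))
    have key : y * (α * f y) < y * f (α * y) := by linarith only [h3, pos]
    exact lt_of_mul_lt_mul_left key (le_of_lt hy)
  -- tm is positive (otherwise rh um = 0, contradicting rc up < rh um)
  have tm_pos : 0 < tm := by
    rcases eq_or_lt_of_le htmI.1 with h | h
    swap
    · exact h
    exfalso
    have htm0 : tm = 0 := h.symm
    have hKm0 : Km = 0 := by rw [hKm_def, htm0, zero_div, hf0, mul_zero]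
    have hum0 : um = f' 0 := by rw [hum_eq, htm0, zero_div]
    have ehm' : f hm = um * hm := by rw [ehm, hKm0, htm0]; ring
    rcases eq_or_lt_of_le hhmI.1 with hh | hh
    · rw [← hh] at hcross
      linarith only [hcross, hcpI.1]
    · obtain ⟨c, hc, e⟩ := aux_mvt f f' hh
        (fun z hz => hfd1 z ⟨hz.1, le_trans hz.2 hhmI.2⟩)
      rw [hf0] at e
      have hcI : c ∈ Set.Icc (0:ℝ) R :=
        ⟨le_of_lt hc.1, le_trans (le_of_lt hc.2) hhmI.2⟩
      have hlt2 := d_anti 0 ⟨le_refl 0, le_of_lt hR⟩ c hcI hc.1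
      have hfc' : f' c < um := by
        rw [hum0]
        have := mul_pos hβ hc.1
        linarith only [hlt2, this]
      linarith only [ehm', e, mul_pos (sub_pos.2 hfc') hh]
  have tp_pos : 0 < tp := lt_trans tm_pos tmtp
  have tmR : tm ∈ Set.Icc (0:ℝ) R := ⟨htmI.1, le_trans htmI.2 (le_of_lt hαR)⟩
  have tpR : tp ∈ Set.Icc (0:ℝ) R := ⟨htpI.1, le_trans htpI.2 (le_of_lt hαR)⟩
  -- f is strictly above the tangent value at the tangency points
  have gm_tm : Km + um * (tm - tm) < f tm := by
    have h1 : 0 < tm / α := by positivity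
    have h2 : tm / α ≤ R := by rw [div_le_iff₀ hα0]; linarith only [htmI.2]
    have h3 := fstrict (tm / α) h1 h2
    have h4 : α * (tm / α) = tm := by field_simp
    rw [h4, ← hKm_def] at h3
    linarith only [h3]
  have gp_tp : Kp + up * (tp - tp) < f tp := by
    have h1 : 0 < tp / α := by positivity
    have h2 : tp / α ≤ R := by rw [div_le_iff₀ hα0]; linarith only [htpI.2]
    have h3 := fstrict (tp / α) h1 h2
    have h4 : α * (tp / α) = tp := by field_simp
    rw [h4, ← hKp_def] at h3
    linarith only [h3]
  have insm := inside um Km tm cm hm tm Hcm Hhm cmnn um0 tmR gm_tm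
  have insp := inside up Kp tp cp hp tp Hcp Hhp cpnn up0 tpR gp_tp
  -- ordering
  have ord1 : cm < cp := by
    rcases le_or_gt tm cp with h | h
    · exact lt_of_lt_of_le insm.1 h
    · have hp2 : 0 < (um - up) * (tm - cp) := mul_pos (sub_pos.2 hlt) (sub_pos.2 h)
      have key : Km + um * (cp - tm) < f cp := by
        rw [ecp]
        linarith only [KmKp, hp2]
      exact (inside um Km tm cm hm cp Hcm Hhm cmnn um0 hcpI key).1
  have ord3 : hm < hp := by
    rcases le_or_gt hm tp with h | h
    · exact lt_of_le_of_lt h insp.2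
    · have hp2 : 0 < (um - up) * (hm - tp) := mul_pos (sub_pos.2 hlt) (sub_pos.2 h)
      have key : Kp + up * (hm - tp) < f hm := by
        rw [ehm]
        linarith only [KpKm, hp2]
      exact (inside up Kp tp cp hp hm Hcp Hhp cpnn up0 hhmI key).2
  have cphp : cp < hp := lt_trans hcross ord3
  have hpos : (0:ℝ) < hp - cp := sub_pos.2 cphp
  -- quantitative estimate
  have hA1 : Kp + up * (hm - tp) ≤ f hm := by
    have h3 := tp3 cp hm hp hcpI.1 hhpI.2 hcross ord3
    rw [ecp, ehp] at h3
    have key : (hp - cp) * (Kp + up * (hm - tp)) ≤ (hp - cp) * f hm := by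
      linarith only [h3]
    exact le_of_mul_le_mul_left key hpos
  have hA2 : f cm ≤ Kp + up * (cm - tp) - β / 2 * ((cp - cm) * (hp - cm)) := by
    have h3 := tp3s cm cp hp hcmI.1 hhpI.2 ord1 cphp
    rw [ecp, ehp] at h3
    have key : (hp - cp) * f cm
        ≤ (hp - cp) * (Kp + up * (cm - tp) - β / 2 * ((cp - cm) * (hp - cm))) := by
      linarith only [h3]
    exact le_of_mul_le_mul_left key hpos
  have idm : f hm - f cm = um * (hm - cm) := by rw [ehm, ecm]; ring
  have E : 0 ≤ β / 2 * ((cp - cm) * (hp - hm)) := by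
    have h1 := mul_nonneg (sub_nonneg.2 (le_of_lt ord1)) (sub_nonneg.2 (le_of_lt ord3))
    have h2 : (0:ℝ) ≤ β / 2 := by positivity
    exact mul_nonneg h2 h1
  have h5 : β / 2 * ((cp - cm) * (hm - cm)) ≤ (um - up) * (hm - cm) := by
    linarith only [hA1, hA2, idm, E]
  have hmcm : 0 < hm - cm := by linarith only [ord1, hcross]
  refine ⟨⟨ord1, hcross, ord3⟩, ?_⟩
  nlinarith only [h5, hmcm]
end
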